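/- For star bodies K, L in R^n and 0 ≤ i ≤ n-2, the dual quermassintegrals satisfy the dual Brunn–Minkowski inequality W̃_i(K ~+ L)^{1/(n-i)} ≤ W̃_i(K)^{1/(n-i)} + W̃_i(L)^{1/(n-i)}, with equality if and only if K and L are dilates. -/

import Mathlib

set_option maxHeartbeats 1000000


open MeasureTheory Metric
open scoped RealInnerProductSpace

noncomputable section

/-- Euclidean space ℝⁿ. -/
abbrev Euc (n : ℕ) := EuclideanSpace ℝ (Fin n)

/-- The unit sphere S^{n-1} ⊂ ℝⁿ. -/
abbrev Sph (n : ℕ) := Metric.sphere (0 : Euc n) 1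

/-- Spherical Lebesgue measure on S^{n-1}. -/
def sphMeasure (n : ℕ) [NeZero n] : Measure (Sph n) := volume.toSphere

/-- A star body (with respect to the origin) in ℝⁿ, described by its continuous
positive radial function on the unit sphere. -/
structure StarBody (n : ℕ) where
  radial : C(Sph n, ℝ)
  pos : ∀ u, 0 < radial u

/-- Two star bodies are dilates if their radial functions are proportional. -/
def Dilates (n : ℕ) (K L : StarBody n) : Prop :=
  ∃ c : ℝ, 0 < c ∧ ∀ u, K.radial u = c * L.radial u

/-- The i-th dual quermassintegral W̃_i(L) = (1/n) ∫ ρ(L,u)^{n-i} du. -/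
def dualQuermass (n : ℕ) [NeZero n] (i : ℕ) (L : StarBody n) : ℝ :=
  (1 / n : ℝ) * ∫ u, L.radial u ^ (n - i) ∂(sphMeasure n)

/-- The radial Minkowski sum K ~+ L, with ρ(K ~+ L,·) = ρ(K,·) + ρ(L,·). -/
def radAdd (n : ℕ) (K L : StarBody n) : StarBody n :=
  ⟨K.radial + L.radial, fun u => by
    simpa using add_pos (K.pos u) (L.pos u)⟩

/-! ### Auxiliary lemmas -/

instance sphFinite (n : ℕ) [NeZero n] : IsFiniteMeasure (sphMeasure n) := by
  unfold sphMeasure; infer_instance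

instance sphOpenPos (n : ℕ) [NeZero n] : (sphMeasure n).IsOpenPosMeasure := by
  constructor
  intro s hs hne
  have e1 := Measure.toSphere_apply' (μ := (volume : Measure (Euc n))) hs.measurableSet
  have e2 := Measure.toSphere_apply_aux (volume : Measure (Euc n)) s ⟨1, Set.mem_Ioi.mpr one_pos⟩
  show (volume.toSphere) s ≠ 0
  rw [e1, ← e2]
  refine (ENNReal.mul_pos (by simp [finrank_euclideanSpace_fin, NeZero.ne n])
    ?_).ne'
  have hopen : IsOpen ((homeomorphUnitSphereProd (Euc n)) ⁻¹'
      (s ×ˢ Set.Iio ⟨1, Set.mem_Ioi.mpr one_pos⟩)) :=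
    (hs.prod isOpen_Iio).preimage (homeomorphUnitSphereProd (Euc n)).continuous
  have hopen2 : IsOpen ((↑) '' ((homeomorphUnitSphereProd (Euc n)) ⁻¹'
      (s ×ˢ Set.Iio ⟨1, Set.mem_Ioi.mpr one_pos⟩)) : Set (Euc n)) :=
    isOpen_compl_singleton.isOpenMap_subtype_val _ hopen
  refine (hopen2.measure_pos volume ?_).ne'
  obtain ⟨u, hu⟩ := hne
  refine ⟨_, Set.mem_image_of_mem _ (?_ : (homeomorphUnitSphereProd (Euc n)).symm
    (u, ⟨1/2, by norm_num⟩) ∈ _)⟩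
  simp only [Set.mem_preimage, Homeomorph.apply_symm_apply]
  exact ⟨hu, by norm_num [Subtype.mk_lt_mk, Set.mem_Iio]⟩

instance sphNonempty (n : ℕ) [NeZero n] : Nonempty (Sph n) := by
  have : Nontrivial (Euc n) := by infer_instance
  exact (NormedSpace.sphere_nonempty.mpr zero_le_one).to_subtype

lemma sph_integrable {n : ℕ} [NeZero n] {h : Sph n → ℝ} (hh : Continuous h) :
    Integrable h (sphMeasure n) :=
  integrableOn_univ.mp ((hh.locallyIntegrable).integrableOn_isCompact isCompact_univ)

lemma sph_univ_pos (n : ℕ) [NeZero n] : 0 < ((sphMeasure n) Set.univ).toReal :=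
  ENNReal.toReal_pos (isOpen_univ.measure_pos (sphMeasure n) Set.univ_nonempty).ne'
    (measure_ne_top _ _)

lemma sph_integral_pow_pos {n : ℕ} [NeZero n] (p : ℕ) {f : Sph n → ℝ}
    (hf : Continuous f) (hfpos : ∀ u, 0 < f u) :
    0 < ∫ u, f u ^ p ∂(sphMeasure n) := by
  obtain ⟨x₀, -, hx₀⟩ := isCompact_univ.exists_isMinOn Set.univ_nonempty hf.continuousOn
  have hm : 0 < f x₀ := hfpos x₀
  have hbd : ∀ u, f x₀ ^ p ≤ f u ^ p := fun u =>
    pow_le_pow_left₀ hm.le (hx₀ (Set.mem_univ u)) p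
  calc (0:ℝ) < f x₀ ^ p * ((sphMeasure n) Set.univ).toReal :=
        mul_pos (pow_pos hm p) (sph_univ_pos n)
    _ = ∫ _, f x₀ ^ p ∂(sphMeasure n) := by rw [integral_const, smul_eq_mul, measureReal_def]; ring
    _ ≤ ∫ u, f u ^ p ∂(sphMeasure n) :=
        integral_mono (integrable_const _) (sph_integrable (hf.pow p)) hbd

/-- The key Minkowski-type inequality with equality condition, for exponent `p ≥ 2`. -/
theorem key (n : ℕ) [NeZero n] (p : ℕ) (hp2 : 2 ≤ p) (K L : StarBody n) :
    (∫ u, (K.radial u + L.radial u) ^ p ∂(sphMeasure n)) ^ ((1:ℝ)/(p:ℝ)) ≤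
      (∫ u, K.radial u ^ p ∂(sphMeasure n)) ^ ((1:ℝ)/(p:ℝ)) +
      (∫ u, L.radial u ^ p ∂(sphMeasure n)) ^ ((1:ℝ)/(p:ℝ)) ∧
    ((∫ u, (K.radial u + L.radial u) ^ p ∂(sphMeasure n)) ^ ((1:ℝ)/(p:ℝ)) =
      (∫ u, K.radial u ^ p ∂(sphMeasure n)) ^ ((1:ℝ)/(p:ℝ)) +
      (∫ u, L.radial u ^ p ∂(sphMeasure n)) ^ ((1:ℝ)/(p:ℝ)) ↔ Dilates n K L) := by
  set μ := sphMeasure n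
  set f : Sph n → ℝ := fun u => K.radial u
  set g : Sph n → ℝ := fun u => L.radial u
  have hfc : Continuous f := K.radial.continuous
  have hgc : Continuous g := L.radial.continuous
  have hfpos : ∀ u, 0 < f u := K.pos
  have hgpos : ∀ u, 0 < g u := L.pos
  have hp0 : (p:ℝ) ≠ 0 := by positivity
  have hIf : 0 < ∫ u, f u ^ p ∂μ := sph_integral_pow_pos p hfc hfpos
  have hIg : 0 < ∫ u, g u ^ p ∂μ := sph_integral_pow_pos p hgc hgpos
  have hIfg : 0 < ∫ u, (f u + g u) ^ p ∂μ :=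
    sph_integral_pow_pos p (hfc.add hgc) (fun u => add_pos (hfpos u) (hgpos u))
  set A : ℝ := (∫ u, f u ^ p ∂μ) ^ ((1:ℝ)/(p:ℝ)) with hAdef
  set B : ℝ := (∫ u, g u ^ p ∂μ) ^ ((1:ℝ)/(p:ℝ)) with hBdef
  have hA : 0 < A := Real.rpow_pos_of_pos hIf _
  have hB : 0 < B := Real.rpow_pos_of_pos hIg _
  have hrpow_pow : ∀ x : ℝ, 0 < x → (x ^ ((1:ℝ)/(p:ℝ))) ^ p = x := by
    intro x hx
    rw [← Real.rpow_natCast (x ^ ((1:ℝ)/(p:ℝ))) p, ← Real.rpow_mul hx.le]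
    field_simp; simp
  have hApow : A ^ p = ∫ u, f u ^ p ∂μ := hrpow_pow _ hIf
  have hBpow : B ^ p = ∫ u, g u ^ p ∂μ := hrpow_pow _ hIg
  have hAB : 0 < A + B := add_pos hA hB
  set t : ℝ := A / (A + B) with htdef
  have ht0 : 0 < t := div_pos hA hAB
  have ht1 : t < 1 := (div_lt_one hAB).mpr (lt_add_of_pos_right _ hB)
  have ht1' : 1 - t = B / (A + B) := by
    rw [htdef, eq_div_iff hAB.ne', sub_mul, div_mul_cancel₀ _ hAB.ne']; ring
  have hcomb : ∀ u, t * (f u / A) + (1 - t) * (g u / B) = (f u + g u) / (A + B) := by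
    intro u
    rw [ht1', htdef, div_mul_div_comm, div_mul_div_comm,
      mul_comm A, mul_div_mul_right _ _ hA.ne', mul_comm B, mul_div_mul_right _ _ hB.ne',
      ← add_div]
  -- pointwise convexity inequality
  have hpt : ∀ u, ((f u + g u) / (A + B)) ^ p ≤
      t * (f u / A) ^ p + (1 - t) * (g u / B) ^ p := by
    intro u
    have := (convexOn_pow p).2
      (Set.mem_Ici.mpr (div_nonneg (hfpos u).le hA.le))
      (Set.mem_Ici.mpr (div_nonneg (hgpos u).le hB.le)) ht0.le
      (by linarith : (0:ℝ) ≤ 1 - t) (by ring : t + (1 - t) = 1)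
    rw [smul_eq_mul, smul_eq_mul, smul_eq_mul, smul_eq_mul, hcomb u] at this
    exact this
  -- integrals of normalized functions are 1
  have hintf : ∫ u, (f u / A) ^ p ∂μ = 1 := by
    have : ∀ u, (f u / A) ^ p = (1 / A ^ p) * f u ^ p := by
      intro u; rw [div_pow]; field_simp
    rw [integral_congr_ae (Filter.Eventually.of_forall this), integral_const_mul, hApow]
    field_simp
  have hintg : ∫ u, (g u / B) ^ p ∂μ = 1 := by
    have : ∀ u, (g u / B) ^ p = (1 / B ^ p) * g u ^ p := by
      intro u; rw [div_pow]; field_simp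
    rw [integral_congr_ae (Filter.Eventually.of_forall this), integral_const_mul, hBpow]
    field_simp
  have hintfg : ∫ u, ((f u + g u) / (A + B)) ^ p ∂μ =
      (1 / (A + B) ^ p) * ∫ u, (f u + g u) ^ p ∂μ := by
    have : ∀ u, ((f u + g u) / (A + B)) ^ p = (1 / (A + B) ^ p) * (f u + g u) ^ p := by
      intro u; rw [div_pow]; field_simp
    rw [integral_congr_ae (Filter.Eventually.of_forall this), integral_const_mul]
  have hint_fA : Integrable (fun u => (f u / A) ^ p) μ :=
    sph_integrable ((hfc.div_const A).pow p)
  have hint_gB : Integrable (fun u => (g u / B) ^ p) μ :=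
    sph_integrable ((hgc.div_const B).pow p)
  have hint_fgAB : Integrable (fun u => ((f u + g u) / (A + B)) ^ p) μ :=
    sph_integrable (((hfc.add hgc).div_const (A + B)).pow p)
  -- the integrated inequality
  have hmain : ∫ u, ((f u + g u) / (A + B)) ^ p ∂μ ≤ 1 := by
    calc ∫ u, ((f u + g u) / (A + B)) ^ p ∂μ
        ≤ ∫ u, t * (f u / A) ^ p + (1 - t) * (g u / B) ^ p ∂μ :=
          integral_mono hint_fgAB ((hint_fA.const_mul t).add (hint_gB.const_mul (1 - t))) hpt
      _ = t * ∫ u, (f u / A) ^ p ∂μ + (1 - t) * ∫ u, (g u / B) ^ p ∂μ := by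
          rw [integral_add (hint_fA.const_mul t) (hint_gB.const_mul (1 - t)),
            integral_const_mul, integral_const_mul]
      _ = 1 := by rw [hintf, hintg]; ring
  have hineq : (∫ u, (f u + g u) ^ p ∂μ) ^ ((1:ℝ)/(p:ℝ)) ≤ A + B := by
    have h1 : ∫ u, (f u + g u) ^ p ∂μ ≤ (A + B) ^ p := by
      rw [hintfg] at hmain
      have := (div_le_one (by positivity : (0:ℝ) < (A + B) ^ p)).mp (by
        rwa [one_div, inv_mul_eq_div] at hmain)
      exact this
    calc (∫ u, (f u + g u) ^ p ∂μ) ^ ((1:ℝ)/(p:ℝ))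
        ≤ ((A + B) ^ p) ^ ((1:ℝ)/(p:ℝ)) :=
          Real.rpow_le_rpow hIfg.le h1 (by positivity)
      _ = A + B := by
          rw [← Real.rpow_natCast (A + B) p, ← Real.rpow_mul hAB.le]
          field_simp; simp
  refine ⟨hineq, ?_, ?_⟩
  · -- equality → dilates
    intro heq
    have hIeq : ∫ u, (f u + g u) ^ p ∂μ = (A + B) ^ p := by
      have h := congrArg (fun x : ℝ => x ^ p) heq
      calc ∫ u, (f u + g u) ^ p ∂μ
          = ((∫ u, (f u + g u) ^ p ∂μ) ^ ((1:ℝ)/(p:ℝ))) ^ p := (hrpow_pow _ hIfg).symm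
        _ = (A + B) ^ p := h
    have hmain_eq : ∫ u, ((f u + g u) / (A + B)) ^ p ∂μ = 1 := by
      rw [hintfg, hIeq]; field_simp
    -- the defect function
    set D : Sph n → ℝ :=
      fun u => t * (f u / A) ^ p + (1 - t) * (g u / B) ^ p - ((f u + g u) / (A + B)) ^ p
      with hDdef
    have hDnonneg : ∀ u, 0 ≤ D u := fun u => sub_nonneg.mpr (hpt u)
    have hDcont : Continuous D :=
      ((continuous_const.mul ((hfc.div_const A).pow p)).add
        (continuous_const.mul ((hgc.div_const B).pow p))).sub
        (((hfc.add hgc).div_const (A + B)).pow p)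
    have hDint : Integrable D μ := sph_integrable hDcont
    have hDzero : ∫ u, D u ∂μ = 0 := by
      have e : ∫ u, D u ∂μ = (∫ u, t * (f u / A) ^ p + (1 - t) * (g u / B) ^ p ∂μ) -
          ∫ u, ((f u + g u) / (A + B)) ^ p ∂μ :=
        integral_sub ((hint_fA.const_mul t).add (hint_gB.const_mul (1 - t))) hint_fgAB
      rw [e, integral_add (hint_fA.const_mul t) (hint_gB.const_mul (1 - t)),
        integral_const_mul, integral_const_mul, hintf, hintg, hmain_eq]
      ring
    have hDae : D =ᵐ[μ] 0 := (integral_eq_zero_iff_of_nonneg hDnonneg hDint).mp hDzero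
    have hDeq : D = 0 := (Continuous.ae_eq_iff_eq μ hDcont continuous_const).mp hDae
    -- strict convexity forces f u / A = g u / B
    have hprop : ∀ u, f u / A = g u / B := by
      intro u
      by_contra hne
      have hstrict := (strictConvexOn_pow hp2).2
        (Set.mem_Ici.mpr (div_nonneg (hfpos u).le hA.le))
        (Set.mem_Ici.mpr (div_nonneg (hgpos u).le hB.le)) hne ht0
        (by linarith : (0:ℝ) < 1 - t) (by ring : t + (1 - t) = 1)
      rw [smul_eq_mul, smul_eq_mul, smul_eq_mul, smul_eq_mul, hcomb u] at hstrict
      have hDu : 0 < D u := by simp only [hDdef]; linarith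
      rw [hDeq] at hDu
      exact lt_irrefl _ hDu
    refine ⟨A / B, div_pos hA hB, fun u => ?_⟩
    have h1 := hprop u
    rw [div_eq_div_iff hA.ne' hB.ne'] at h1
    show f u = A / B * g u
    rw [div_mul_eq_mul_div, eq_div_iff hB.ne']
    linarith
  · -- dilates → equality
    rintro ⟨c, hc, hcf⟩
    have hfg : ∀ u, f u = c * g u := hcf
    have e1 : ∫ u, (f u + g u) ^ p ∂μ = (c + 1) ^ p * ∫ u, g u ^ p ∂μ := by
      rw [← integral_const_mul]
      refine integral_congr_ae (Filter.Eventually.of_forall fun u => ?_)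
      show (f u + g u) ^ p = (c + 1) ^ p * g u ^ p
      rw [hfg u, ← mul_pow]
      ring_nf
    have e2 : ∫ u, f u ^ p ∂μ = c ^ p * ∫ u, g u ^ p ∂μ := by
      rw [← integral_const_mul]
      refine integral_congr_ae (Filter.Eventually.of_forall fun u => ?_)
      show f u ^ p = c ^ p * g u ^ p
      rw [hfg u, mul_pow]
    have hpowrpow : ∀ x : ℝ, 0 < x → (x ^ p : ℝ) ^ ((1:ℝ)/(p:ℝ)) = x := by
      intro x hx
      rw [← Real.rpow_natCast x p, ← Real.rpow_mul hx.le]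
      field_simp; simp
    rw [e1, hAdef, hBdef, e2,
      Real.mul_rpow (pow_nonneg (by linarith) p) hIg.le,
      Real.mul_rpow (pow_nonneg hc.le p) hIg.le,
      hpowrpow _ hc, hpowrpow _ (by linarith : (0:ℝ) < c + 1)]
    ring

/-- Dual Brunn–Minkowski inequality: for star bodies K, L and 0 ≤ i ≤ n-2,
W̃_i(K ~+ L)^{1/(n-i)} ≤ W̃_i(K)^{1/(n-i)} + W̃_i(L)^{1/(n-i)},
with equality iff K and L are dilates. -/
theorem stmt6 (n i : ℕ) (hn : 3 ≤ n) [NeZero n] (hi : i ≤ n - 2) (K L : StarBody n) :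
    dualQuermass n i (radAdd n K L) ^ ((1 : ℝ) / ((n - i : ℕ) : ℝ)) ≤
      dualQuermass n i K ^ ((1 : ℝ) / ((n - i : ℕ) : ℝ)) +
      dualQuermass n i L ^ ((1 : ℝ) / ((n - i : ℕ) : ℝ)) ∧
    (dualQuermass n i (radAdd n K L) ^ ((1 : ℝ) / ((n - i : ℕ) : ℝ)) =
      dualQuermass n i K ^ ((1 : ℝ) / ((n - i : ℕ) : ℝ)) +
      dualQuermass n i L ^ ((1 : ℝ) / ((n - i : ℕ) : ℝ)) ↔
      Dilates n K L) := by
  set p : ℕ := n - i with hpdef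
  have hp2 : 2 ≤ p := by omega
  have hkey := key n p hp2 K L
  set μ := sphMeasure n
  have hIf : 0 < ∫ u, K.radial u ^ p ∂μ :=
    sph_integral_pow_pos p K.radial.continuous K.pos
  have hIg : 0 < ∫ u, L.radial u ^ p ∂μ :=
    sph_integral_pow_pos p L.radial.continuous L.pos
  have hIfg : 0 < ∫ u, (K.radial u + L.radial u) ^ p ∂μ :=
    sph_integral_pow_pos p (K.radial.continuous.add L.radial.continuous)
      (fun u => add_pos (K.pos u) (L.pos u))
  have hn0 : (0:ℝ) < 1 / n := by
    have : 0 < n := by omega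
    positivity
  set k : ℝ := (1 / n : ℝ) ^ ((1:ℝ)/(p:ℝ)) with hkdef
  have hk : 0 < k := Real.rpow_pos_of_pos hn0 _
  have hsum : ∀ u : Sph n, (radAdd n K L).radial u = K.radial u + L.radial u := by
    intro u; simp [radAdd]
  have hQ : ∀ (M : StarBody n), dualQuermass n i M ^ ((1 : ℝ) / ((n - i : ℕ) : ℝ)) =
      k * (∫ u, M.radial u ^ p ∂μ) ^ ((1:ℝ)/(p:ℝ)) := by
    intro M
    have hIM : 0 < ∫ u, M.radial u ^ p ∂μ :=
      sph_integral_pow_pos p M.radial.continuous M.pos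
    show ((1 / n : ℝ) * ∫ u, M.radial u ^ p ∂μ) ^ ((1:ℝ)/(p:ℝ)) =
      k * (∫ u, M.radial u ^ p ∂μ) ^ ((1:ℝ)/(p:ℝ))
    rw [Real.mul_rpow hn0.le hIM.le]
  have hQsum : dualQuermass n i (radAdd n K L) ^ ((1 : ℝ) / ((n - i : ℕ) : ℝ)) =
      k * (∫ u, (K.radial u + L.radial u) ^ p ∂μ) ^ ((1:ℝ)/(p:ℝ)) := by
    rw [hQ (radAdd n K L)]
    have e : (∫ u, (radAdd n K L).radial u ^ p ∂μ) =
        ∫ u, (K.radial u + L.radial u) ^ p ∂μ :=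
      integral_congr_ae (Filter.Eventually.of_forall fun u => by
        show (radAdd n K L).radial u ^ p = (K.radial u + L.radial u) ^ p
        rw [hsum u])
    rw [e]
  rw [hQsum, hQ K, hQ L, ← mul_add]
  refine ⟨mul_le_mul_of_nonneg_left hkey.1 hk.le, ?_⟩
  rw [← hkey.2]
  exact ⟨fun h => mul_left_cancel₀ hk.ne' h, fun h => by rw [h]⟩
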